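/- A two-dimensional potential heuristic φ is consistent if and only if for every operator o: Δ_o^{ind} + Σ_{V ∉ vars(o)} max_{v ∈ dom(V)} Σ_{f = f_o ∧ (V,v)} w(f)·Δ_o(f_o) ≤ cost(o). -/

import Mathlib

attribute [local instance] Classical.propDecidable

abbrev PState (V : Type) (D : V → Type) := ∀ v, D v
abbrev PAssign (V : Type) (D : V → Type) := ∀ v, Option (D v)

def Models {V : Type} {D : V → Type} (s : PState V D) (f : PAssign V D) : Prop :=
  ∀ v, ∀ x ∈ f v, s v = x

def PModels {V : Type} {D : V → Type} (p f : PAssign V D) : Prop :=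
  ∀ v, ∀ x ∈ f v, p v = some x

structure Op (V : Type) (D : V → Type) where
  pre : PAssign V D
  eff : PAssign V D
  cost : ℝ
  tnf : ∀ v, (pre v).isSome ↔ (eff v).isSome
  cost_nonneg : 0 ≤ cost

def Op.applicable {V : Type} {D : V → Type} (o : Op V D) (s : PState V D) : Prop :=
  Models s o.pre

def Op.res {V : Type} {D : V → Type} (o : Op V D) (s : PState V D) : PState V D :=
  fun v => (o.eff v).getD (s v)

/-- The potential heuristic for features `F` and weights `w`. -/
noncomputable def pot {V : Type} {D : V → Type} [Fintype V]
    (F : Finset (PAssign V D)) (w : PAssign V D → ℝ) (s : PState V D) : ℝ :=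
  ∑ f ∈ F, if Models s f then w f else 0

/-- Restriction of a feature to the variables of `o`. -/
noncomputable def restrictO {V : Type} {D : V → Type} (o : Op V D) (f : PAssign V D) :
    PAssign V D :=
  fun v => if (o.pre v).isSome then f v else none

/-- `Δ_o^{ind}`: state-independent contribution of the context-independent features. -/
noncomputable def deltaInd {V : Type} {D : V → Type} [Fintype V]
    (o : Op V D) (F : Finset (PAssign V D)) (w : PAssign V D → ℝ) : ℝ :=
  ∑ f ∈ F.filter (fun f => ∀ v, (f v).isSome → (o.pre v).isSome),
    w f * ((if PModels o.pre f then (1 : ℝ) else 0) - (if PModels o.eff f then (1 : ℝ) else 0))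

/-- Inner sum of `w(f)·Δ_o(f_o)` over the context-dependent features `f = f_o ∧ (u,x)`. -/
noncomputable def innerSum {V : Type} {D : V → Type} [Fintype V]
    (o : Op V D) (F : Finset (PAssign V D)) (w : PAssign V D → ℝ)
    (u : V) (x : D u) : ℝ :=
  ∑ f ∈ F.filter (fun f => f u = some x ∧ ∃ v, (o.pre v).isSome ∧ (f v).isSome),
    w f * ((if PModels o.pre (restrictO o f) then (1 : ℝ) else 0) -
           (if PModels o.eff (restrictO o f) then (1 : ℝ) else 0))


section Aux
variable {V : Type} {D : V → Type}

lemma pre_eq_some (o : Op V D) {s : PState V D} (happ : o.applicable s)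
    {v : V} (hv : (o.pre v).isSome) : o.pre v = some (s v) := by
  obtain ⟨x, hx⟩ := Option.isSome_iff_exists.mp hv
  rw [hx, happ v x (Option.mem_def.mpr hx)]

lemma eff_eq_some (o : Op V D) (s : PState V D) {v : V} (hv : (o.eff v).isSome) :
    o.eff v = some (o.res s v) := by
  obtain ⟨x, hx⟩ := Option.isSome_iff_exists.mp hv
  simp [Op.res, hx]

lemma res_eq_self (o : Op V D) (s : PState V D) {v : V} (hv : ¬ (o.pre v).isSome) :
    o.res s v = s v := by
  have h : o.eff v = none := Option.not_isSome_iff_eq_none.mp (fun h => hv ((o.tnf v).mpr h))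
  simp [Op.res, h]

lemma models_iff_pre (o : Op V D) {s : PState V D} (happ : o.applicable s)
    {f : PAssign V D} (hf : ∀ v, (f v).isSome → (o.pre v).isSome) :
    Models s f ↔ PModels o.pre f := by
  constructor
  · intro h v x hx
    have h1 : o.pre v = some (s v) :=
      pre_eq_some o happ (hf v (Option.isSome_iff_exists.mpr ⟨x, Option.mem_def.mp hx⟩))
    rw [h1, h v x hx]
  · intro h v x hx
    have hsome : (o.pre v).isSome := hf v (Option.isSome_iff_exists.mpr ⟨x, Option.mem_def.mp hx⟩)
    have h1 : o.pre v = some (s v) := pre_eq_some o happ hsome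
    have h2 : o.pre v = some x := h v x hx
    rw [h1] at h2
    exact Option.some_injective _ h2

lemma models_res_iff_eff (o : Op V D) (s : PState V D)
    {f : PAssign V D} (hf : ∀ v, (f v).isSome → (o.pre v).isSome) :
    Models (o.res s) f ↔ PModels o.eff f := by
  constructor
  · intro h v x hx
    have he : (o.eff v).isSome :=
      (o.tnf v).mp (hf v (Option.isSome_iff_exists.mpr ⟨x, Option.mem_def.mp hx⟩))
    have h1 := eff_eq_some o s he
    rw [h1, h v x hx]
  · intro h v x hx
    have h2 : o.eff v = some x := h v x hx
    show o.res s v = x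
    simp [Op.res, h2]

lemma unique_outside [Fintype V] [DecidableEq V] (o : Op V D) {f : PAssign V D}
    (hsize : (Finset.univ.filter fun v => (f v).isSome).card ≤ 2)
    {u₀ v₀ u : V} (hu₀f : (f u₀).isSome) (hu₀ : ¬(o.pre u₀).isSome)
    (hv₀f : (f v₀).isSome) (hv₀ : (o.pre v₀).isSome)
    (huf : (f u).isSome) (hu : ¬(o.pre u).isSome) : u = u₀ := by
  by_contra hne
  have h1 : u ≠ v₀ := fun h => hu (h ▸ hv₀)
  have h2 : u₀ ≠ v₀ := fun h => hu₀ (h ▸ hv₀)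
  have hsub : ({u, u₀, v₀} : Finset V) ⊆ Finset.univ.filter fun v => (f v).isSome := by
    intro x hx
    simp only [Finset.mem_insert, Finset.mem_singleton] at hx
    rcases hx with rfl | rfl | rfl <;> simp [huf, hu₀f, hv₀f]
  have hcard : ({u, u₀, v₀} : Finset V).card = 3 := by
    rw [Finset.card_insert_of_notMem (by simp [hne, h1]),
        Finset.card_insert_of_notMem (by simp [h2]), Finset.card_singleton]
  have := Finset.card_le_card hsub
  omega

lemma models_mixed_pre [Fintype V] [DecidableEq V] (o : Op V D) {s : PState V D}
    (happ : o.applicable s) {f : PAssign V D}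
    (hsize : (Finset.univ.filter fun v => (f v).isSome).card ≤ 2)
    {u₀ : V} {x₀ : D u₀} (hu₀ : ¬(o.pre u₀).isSome) (hfx : f u₀ = some x₀)
    {v₀ : V} (hv₀ : (o.pre v₀).isSome) (hfv₀ : (f v₀).isSome) :
    Models s f ↔ (s u₀ = x₀ ∧ PModels o.pre (restrictO o f)) := by
  constructor
  · intro h
    refine ⟨h u₀ x₀ (Option.mem_def.mpr hfx), ?_⟩
    intro v x hx
    rw [Option.mem_def] at hx
    unfold restrictO at hx
    by_cases hp : (o.pre v).isSome
    · rw [if_pos hp] at hx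
      have hs := h v x (Option.mem_def.mpr hx)
      rw [pre_eq_some o happ hp, hs]
    · rw [if_neg hp] at hx; exact absurd hx (by simp)
  · rintro ⟨hsu, h⟩ v x hx
    rw [Option.mem_def] at hx
    by_cases hp : (o.pre v).isSome
    · have h2 : o.pre v = some x := h v x (by
        rw [Option.mem_def]; unfold restrictO; rw [if_pos hp]; exact hx)
      have h1 := pre_eq_some o happ hp
      rw [h1] at h2
      exact Option.some_injective _ h2
    · have hv : v = u₀ := unique_outside o hsize
        (Option.isSome_iff_exists.mpr ⟨x₀, hfx⟩) hu₀ hfv₀ hv₀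
        (Option.isSome_iff_exists.mpr ⟨x, hx⟩) hp
      subst hv
      rw [hfx] at hx
      have : x₀ = x := Option.some_injective _ hx
      rw [← this, hsu]

lemma models_mixed_eff [Fintype V] [DecidableEq V] (o : Op V D) (s : PState V D)
    {f : PAssign V D}
    (hsize : (Finset.univ.filter fun v => (f v).isSome).card ≤ 2)
    {u₀ : V} {x₀ : D u₀} (hu₀ : ¬(o.pre u₀).isSome) (hfx : f u₀ = some x₀)
    {v₀ : V} (hv₀ : (o.pre v₀).isSome) (hfv₀ : (f v₀).isSome) :
    Models (o.res s) f ↔ (s u₀ = x₀ ∧ PModels o.eff (restrictO o f)) := by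
  have hr : o.res s u₀ = s u₀ := res_eq_self o s hu₀
  constructor
  · intro h
    refine ⟨by rw [← hr]; exact h u₀ x₀ (Option.mem_def.mpr hfx), ?_⟩
    intro v x hx
    rw [Option.mem_def] at hx
    unfold restrictO at hx
    by_cases hp : (o.pre v).isSome
    · rw [if_pos hp] at hx
      have hs := h v x (Option.mem_def.mpr hx)
      have he : (o.eff v).isSome := (o.tnf v).mp hp
      rw [eff_eq_some o s he, hs]
    · rw [if_neg hp] at hx; exact absurd hx (by simp)
  · rintro ⟨hsu, h⟩ v x hx
    rw [Option.mem_def] at hx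
    by_cases hp : (o.pre v).isSome
    · have h2 : o.eff v = some x := h v x (by
        rw [Option.mem_def]; unfold restrictO; rw [if_pos hp]; exact hx)
      show o.res s v = x
      simp [Op.res, h2]
    · have hv : v = u₀ := unique_outside o hsize
        (Option.isSome_iff_exists.mpr ⟨x₀, hfx⟩) hu₀ hfv₀ hv₀
        (Option.isSome_iff_exists.mpr ⟨x, hx⟩) hp
      subst hv
      rw [hfx] at hx
      have hxx : x₀ = x := Option.some_injective _ hx
      rw [hr, hsu]; exact hxx

end Aux

section Main
variable {V : Type} {D : V → Type}

lemma perfeature [Fintype V] [DecidableEq V] (o : Op V D) {s : PState V D}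
    (happ : o.applicable s) (w : PAssign V D → ℝ) {f : PAssign V D}
    (hsize : (Finset.univ.filter fun v => (f v).isSome).card ≤ 2) :
    ∑ u ∈ Finset.univ.filter (fun v : V => ¬ (o.pre v).isSome),
      (if (f u = some (s u) ∧ ∃ v, (o.pre v).isSome ∧ (f v).isSome)
        then w f * ((if PModels o.pre (restrictO o f) then (1:ℝ) else 0) -
                    (if PModels o.eff (restrictO o f) then (1:ℝ) else 0)) else 0)
    = if (∀ v, (f v).isSome → (o.pre v).isSome) then 0
      else ((if Models s f then w f else 0) - (if Models (o.res s) f then w f else 0)) := by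
  by_cases hp : ∀ v, (f v).isSome → (o.pre v).isSome
  · rw [if_pos hp]
    apply Finset.sum_eq_zero
    intro u hu
    rw [if_neg]
    rintro ⟨h1, -⟩
    exact (Finset.mem_filter.mp hu).2 (hp u (Option.isSome_iff_exists.mpr ⟨_, h1⟩))
  · rw [if_neg hp]
    push_neg at hp
    obtain ⟨u₀, hu₀f, hu₀⟩ := hp
    by_cases hex : ∃ v, (o.pre v).isSome ∧ (f v).isSome
    · obtain ⟨v₀, hv₀, hfv₀⟩ := hex
      obtain ⟨x₀, hfx⟩ := Option.isSome_iff_exists.mp hu₀f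
      have hex' : ∃ v, (o.pre v).isSome ∧ (f v).isSome := ⟨v₀, hv₀, hfv₀⟩
      have hmem : u₀ ∈ Finset.univ.filter (fun v : V => ¬ (o.pre v).isSome) :=
        Finset.mem_filter.mpr ⟨Finset.mem_univ _, hu₀⟩
      have hzero : ∀ u ∈ Finset.univ.filter (fun v : V => ¬ (o.pre v).isSome), u ≠ u₀ →
          (if (f u = some (s u) ∧ ∃ v, (o.pre v).isSome ∧ (f v).isSome)
            then w f * ((if PModels o.pre (restrictO o f) then (1:ℝ) else 0) -
                        (if PModels o.eff (restrictO o f) then (1:ℝ) else 0)) else 0) = 0 := by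
        intro u hu hne
        rw [if_neg]
        rintro ⟨h1, -⟩
        exact hne (unique_outside o hsize hu₀f hu₀ hfv₀ hv₀
          (Option.isSome_iff_exists.mpr ⟨_, h1⟩) (Finset.mem_filter.mp hu).2)
      rw [Finset.sum_eq_single_of_mem u₀ hmem hzero]
      rw [models_mixed_pre o happ hsize hu₀ hfx hv₀ hfv₀,
          models_mixed_eff o s hsize hu₀ hfx hv₀ hfv₀]
      have hcond : f u₀ = some (s u₀) ↔ s u₀ = x₀ := by
        rw [hfx]
        exact ⟨fun h => (Option.some_injective _ h).symm, fun h => by rw [h]⟩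
      by_cases hs : s u₀ = x₀
      · rw [if_pos ⟨hcond.mpr hs, hex'⟩]
        by_cases h1 : PModels o.pre (restrictO o f) <;>
          by_cases h2 : PModels o.eff (restrictO o f) <;>
          simp [h1, h2, hs]
      · rw [if_neg (fun h => hs (hcond.mp h.1)),
            if_neg (fun h => hs h.1), if_neg (fun h => hs h.1), sub_self]
    · have hall : ∀ v, (f v).isSome → ¬(o.pre v).isSome := by
        push_neg at hex
        intro v hv hpv
        exact hex v hpv hv
      have hM : Models s f ↔ Models (o.res s) f := by
        constructor <;> intro h v x hx
        · have hr := res_eq_self o s (hall v (Option.isSome_iff_exists.mpr ⟨x, hx⟩))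
          rw [hr]
          exact h v x hx
        · have hr := res_eq_self o s (hall v (Option.isSome_iff_exists.mpr ⟨x, hx⟩))
          have := h v x hx
          rwa [hr] at this
      have h0 : ∀ u ∈ Finset.univ.filter (fun v : V => ¬ (o.pre v).isSome),
          (if (f u = some (s u) ∧ ∃ v, (o.pre v).isSome ∧ (f v).isSome)
            then w f * ((if PModels o.pre (restrictO o f) then (1:ℝ) else 0) -
                        (if PModels o.eff (restrictO o f) then (1:ℝ) else 0)) else 0) = 0 := by
        intro u hu
        rw [if_neg]
        rintro ⟨-, hv⟩
        exact hex hv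
      rw [Finset.sum_eq_zero h0]
      simp [hM]

lemma key_eq [Fintype V] [DecidableEq V] (o : Op V D)
    (F : Finset (PAssign V D)) (w : PAssign V D → ℝ)
    (hsize : ∀ f ∈ F, (Finset.univ.filter fun v => (f v).isSome).card ≤ 2)
    (s : PState V D) (happ : o.applicable s) :
    pot F w s - pot F w (o.res s) =
      deltaInd o F w +
        ∑ u ∈ Finset.univ.filter (fun v : V => ¬ (o.pre v).isSome),
          innerSum o F w u (s u) := by
  have hsplit : pot F w s - pot F w (o.res s)
      = ∑ f ∈ F, ((if Models s f then w f else 0) - (if Models (o.res s) f then w f else 0)) := by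
    rw [pot, pot, ← Finset.sum_sub_distrib]
  rw [hsplit,
    ← Finset.sum_filter_add_sum_filter_not F (fun f => ∀ v, (f v).isSome → (o.pre v).isSome)]
  congr 1
  · rw [deltaInd]
    apply Finset.sum_congr rfl
    intro f hf
    have hpf := (Finset.mem_filter.mp hf).2
    rw [models_iff_pre o happ hpf, models_res_iff_eff o s hpf]
    by_cases h1 : PModels o.pre f <;> by_cases h2 : PModels o.eff f <;> simp [h1, h2]
  · have hinner : ∀ u : V, innerSum o F w u (s u)
        = ∑ f ∈ F, if (f u = some (s u) ∧ ∃ v, (o.pre v).isSome ∧ (f v).isSome)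
            then w f * ((if PModels o.pre (restrictO o f) then (1:ℝ) else 0) -
                        (if PModels o.eff (restrictO o f) then (1:ℝ) else 0)) else 0 := by
      intro u
      rw [innerSum, Finset.sum_filter]
    simp only [hinner]
    rw [Finset.sum_comm, Finset.sum_filter]
    apply Finset.sum_congr rfl
    intro f hf
    rw [perfeature o happ w (hsize f hf)]
    by_cases hpf : ∀ v, (f v).isSome → (o.pre v).isSome
    · rw [if_pos hpf, if_neg (not_not_intro hpf)]
    · rw [if_neg hpf, if_pos hpf]

end Main

/-- A two-dimensional potential heuristic is consistent iff for every operator `o`: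
`Δ_o^{ind} + Σ_{V ∉ vars(o)} max_{v ∈ dom(V)} Σ_{f = f_o ∧ (V,v)} w(f)·Δ_o(f_o) ≤ cost(o)`. -/
theorem stmt7 {V : Type} {D : V → Type} [Fintype V] [DecidableEq V]
    [∀ v, Fintype (D v)] [∀ v, DecidableEq (D v)] [∀ v, Nonempty (D v)]
    (Ops : Set (Op V D)) (F : Finset (PAssign V D)) (w : PAssign V D → ℝ)
    (hsize : ∀ f ∈ F, (Finset.univ.filter fun v => (f v).isSome).card ≤ 2) :
    (∀ o ∈ Ops, ∀ s : PState V D, o.applicable s →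
        pot F w s - pot F w (o.res s) ≤ o.cost) ↔
    (∀ o ∈ Ops,
        deltaInd o F w +
          ∑ u ∈ Finset.univ.filter (fun v : V => ¬ (o.pre v).isSome),
            Finset.univ.sup' Finset.univ_nonempty (fun x : D u => innerSum o F w u x)
          ≤ o.cost) := by
  constructor
  · intro hcons o ho
    choose g hgmem hg using fun u : V =>
      Finset.exists_mem_eq_sup' (Finset.univ_nonempty (α := D u))
        (fun x : D u => innerSum o F w u x)
    set s : PState V D := fun v => if h : (o.pre v).isSome then (o.pre v).get h else g v
      with hs
    have happ : o.applicable s := by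
      intro v x hx
      have hsome : (o.pre v).isSome := Option.isSome_iff_exists.mpr ⟨x, hx⟩
      show (if h : (o.pre v).isSome then (o.pre v).get h else g v) = x
      rw [dif_pos hsome]
      exact Option.get_of_mem hsome hx
    have hle := hcons o ho s happ
    rw [key_eq o F w hsize s happ] at hle
    have heq : ∀ u ∈ Finset.univ.filter (fun v : V => ¬ (o.pre v).isSome),
        Finset.univ.sup' Finset.univ_nonempty (fun x : D u => innerSum o F w u x)
          = innerSum o F w u (s u) := by
      intro u hu
      have hnp := (Finset.mem_filter.mp hu).2
      have hsu : s u = g u := by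
        show (if h : (o.pre u).isSome then (o.pre u).get h else g u) = g u
        rw [dif_neg hnp]
      rw [hsu, hg u]
    rw [Finset.sum_congr rfl heq]
    exact hle
  · intro hbound o ho s happ
    rw [key_eq o F w hsize s happ]
    refine le_trans ?_ (hbound o ho)
    exact add_le_add_right
      (Finset.sum_le_sum fun u hu => Finset.le_sup' _ (Finset.mem_univ (s u))) _
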